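/- Let φ : [0,∞) → [0,∞) with Λ = ∫_0^∞ φ(s) ds < ∞. Then for all n ∈ ℕ_+ and t ≥ 0, |∫_0^t φ^{*n}(s) ds − Λ^n| ≤ n Λ^{n-1} ∫_{t/n}^∞ φ(s) ds. -/

import Mathlib

open MeasureTheory Set ENNReal

/-- Convolution f*g(t) = ∫_0^t f(t−s) g(s) ds (vanishing for t ≤ 0). -/
noncomputable def conv (f g : ℝ → ℝ) (t : ℝ) : ℝ :=
  ∫ s in Set.Ioc 0 t, f (t - s) * g s

/-- n-fold convolution φ^{*n} of φ (for n ≥ 1; the value at n = 0 is irrelevant here). -/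
noncomputable def convIter (φ : ℝ → ℝ) : ℕ → ℝ → ℝ
  | 0 => fun _ => 0
  | 1 => φ
  | n + 2 => conv φ (convIter φ (n + 1))


lemma conv_meas {f g : ℝ → ℝ} (hf : Measurable f) (hg : Measurable g) :
    Measurable (conv f g) := by
  have h : Measurable fun p : ℝ × ℝ =>
      {q : ℝ × ℝ | 0 < q.2 ∧ q.2 ≤ q.1}.indicator (fun q => f (q.1 - q.2) * g q.2) p := by
    apply Measurable.indicator
    · exact ((hf.comp (measurable_fst.sub measurable_snd)).mul (hg.comp measurable_snd))
    · exact (measurableSet_lt measurable_const measurable_snd).inter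
        (measurableSet_le measurable_snd measurable_fst)
  have := h.stronglyMeasurable.integral_prod_right' (ν := (volume : Measure ℝ))
  have heq : ∀ t, conv f g t = ∫ s, {q : ℝ × ℝ | 0 < q.2 ∧ q.2 ≤ q.1}.indicator
      (fun q => f (q.1 - q.2) * g q.2) (t, s) := by
    intro t
    rw [conv, ← integral_indicator measurableSet_Ioc]
    refine integral_congr_ae (Filter.Eventually.of_forall fun s => ?_)
    simp [Set.indicator_apply, Set.mem_Ioc]
  simpa [← heq] using this.measurable

lemma conv_nonneg {f g : ℝ → ℝ} (hf : ∀ s, 0 ≤ f s) (hg : ∀ s, 0 ≤ g s) (t : ℝ) :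
    0 ≤ conv f g t :=
  integral_nonneg fun s => mul_nonneg (hf _) (hg _)

lemma convIter_meas {φ : ℝ → ℝ} (hφ : Measurable φ) (n : ℕ) :
    Measurable (convIter φ n) := by
  induction n using Nat.strong_induction_on with
  | _ n ih =>
    match n with
    | 0 => simpa [convIter] using measurable_const
    | 1 => simpa [convIter] using hφ
    | n + 2 => exact conv_meas hφ (ih (n+1) (by omega))

lemma convIter_nonneg {φ : ℝ → ℝ} (hφ : ∀ s, 0 ≤ φ s) (n : ℕ) : ∀ t : ℝ,
    0 ≤ convIter φ n t := by
  induction n using Nat.strong_induction_on with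
  | _ n ih =>
    match n with
    | 0 => intro t; simp [convIter]
    | 1 => intro t; simpa [convIter] using hφ t
    | n + 2 => exact conv_nonneg hφ (ih (n+1) (by omega))

lemma ltrans (F : ℝ → ℝ≥0∞) (s c : ℝ) :
    ∫⁻ u in Set.Ioi c, F (u - s) = ∫⁻ x in Set.Ioi (c - s), F x := by
  have hemb : MeasurableEmbedding (fun u : ℝ => u - s) :=
    (MeasurableEquiv.subRight s).measurableEmbedding
  have h := (measurePreserving_sub_right (volume : Measure ℝ) s).setLIntegral_comp_preimage_emb
    hemb F (Set.Ioi (c - s))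
  have hpre : (fun u : ℝ => u - s) ⁻¹' Set.Ioi (c - s) = Set.Ioi c := by
    ext u; simp [sub_lt_sub_iff_right]
  rwa [hpre] at h

/-- key swap lemma -/
lemma lswap {F G : ℝ → ℝ≥0∞} (hF : Measurable F) (hG : Measurable G) (t : ℝ) :
    ∫⁻ u in Set.Ioi t, (∫⁻ s in Set.Ioc 0 u, F (u - s) * G s) =
      ∫⁻ s in Set.Ioi 0, G s * ∫⁻ x in Set.Ioi (max (t - s) 0), F x := by
  have hK : Measurable fun q : ℝ × ℝ =>
      {q : ℝ × ℝ | 0 < q.2 ∧ q.2 ≤ q.1}.indicator (fun q => F (q.1 - q.2) * G q.2) q :=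
    Measurable.indicator ((hF.comp (measurable_fst.sub measurable_snd)).mul
      (hG.comp measurable_snd))
      ((measurableSet_lt measurable_const measurable_snd).inter
        (measurableSet_le measurable_snd measurable_fst))
  calc ∫⁻ u in Set.Ioi t, (∫⁻ s in Set.Ioc 0 u, F (u - s) * G s)
      = ∫⁻ u in Set.Ioi t, ∫⁻ s,
          {q : ℝ × ℝ | 0 < q.2 ∧ q.2 ≤ q.1}.indicator (fun q => F (q.1 - q.2) * G q.2) (u, s) := by
        refine setLIntegral_congr_fun measurableSet_Ioi
          (fun u _ => ?_)
        rw [← lintegral_indicator measurableSet_Ioc]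
        refine lintegral_congr fun s => ?_
        simp [Set.indicator_apply, Set.mem_Ioc]
    _ = ∫⁻ s, ∫⁻ u in Set.Ioi t,
          {q : ℝ × ℝ | 0 < q.2 ∧ q.2 ≤ q.1}.indicator (fun q => F (q.1 - q.2) * G q.2) (u, s) := by
        exact lintegral_lintegral_swap (hK.aemeasurable)
    _ = ∫⁻ s in Set.Ioi 0, G s * ∫⁻ x in Set.Ioi (max (t - s) 0), F x := by
        rw [← lintegral_indicator measurableSet_Ioi]
        refine lintegral_congr fun s => ?_
        by_cases hs : 0 < s
        · rw [Set.indicator_of_mem (by exact hs : s ∈ Set.Ioi 0)]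
          have h1 : ∀ u : ℝ, {q : ℝ × ℝ | 0 < q.2 ∧ q.2 ≤ q.1}.indicator
              (fun q => F (q.1 - q.2) * G q.2) (u, s)
              = (Set.Ici s).indicator (fun u => F (u - s)) u * G s := by
            intro u
            by_cases hu : s ≤ u <;>
              simp [Set.indicator_apply, Set.mem_setOf_eq, Set.mem_Ici, hs, hu]
          simp_rw [h1]
          have hmeas : Measurable fun u : ℝ => (Set.Ici s).indicator (fun u => F (u - s)) u :=
            (hF.comp (measurable_id.sub measurable_const)).indicator measurableSet_Ici
          rw [lintegral_mul_const _ hmeas, mul_comm]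
          congr 1
          rw [lintegral_indicator measurableSet_Ici,
            Measure.restrict_restrict measurableSet_Ici]
          have hae : (Set.Ici s ∩ Set.Ioi t : Set ℝ) =ᵐ[volume] (Set.Ioi (s ⊔ t) : Set ℝ) := by
            have h2 : (Set.Ici s ∩ Set.Ioi t : Set ℝ) =ᵐ[volume] (Set.Ioi s ∩ Set.Ioi t : Set ℝ) :=
              Filter.EventuallyEq.inter (Ioi_ae_eq_Ici (a := s)).symm
                (Filter.EventuallyEq.refl _ _)
            rw [Set.Ioi_inter_Ioi] at h2
            exact h2
          rw [setLIntegral_congr hae, ltrans]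
          have h3 : s ⊔ t - s = (t - s) ⊔ 0 := by
            rcases le_total s t with h | h
            · rw [max_eq_right h, max_eq_left (by linarith)]
            · rw [max_eq_left h, max_eq_right (by linarith), sub_self]
          rw [h3]
        · rw [Set.indicator_of_notMem (by simpa using hs)]
          have : ∀ u : ℝ, {q : ℝ × ℝ | 0 < q.2 ∧ q.2 ≤ q.1}.indicator
              (fun q => F (q.1 - q.2) * G q.2) (u, s) = 0 := fun u =>
            Set.indicator_of_notMem (fun h => hs h.1) _
          simp [this]

lemma ltotal {F G : ℝ → ℝ≥0∞} (hF : Measurable F) (hG : Measurable G) :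
    ∫⁻ u in Set.Ioi (0:ℝ), (∫⁻ s in Set.Ioc 0 u, F (u - s) * G s) =
      (∫⁻ x in Set.Ioi (0:ℝ), F x) * ∫⁻ s in Set.Ioi (0:ℝ), G s := by
  rw [lswap hF hG 0]
  have : ∀ s ∈ Set.Ioi (0:ℝ), G s * (∫⁻ x in Set.Ioi (max (0 - s) 0), F x)
      = G s * ∫⁻ x in Set.Ioi (0:ℝ), F x := by
    intro s hs
    rw [max_eq_right (by simp at hs ⊢; linarith)]
  rw [setLIntegral_congr_fun measurableSet_Ioi this,
    lintegral_mul_const _ hG, mul_comm]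

lemma ltail {F G : ℝ → ℝ≥0∞} (hF : Measurable F) (hG : Measurable G)
    {a t : ℝ} (ha : 0 ≤ a) (hat : a ≤ t) :
    ∫⁻ u in Set.Ioi t, (∫⁻ s in Set.Ioc 0 u, F (u - s) * G s)
      ≤ (∫⁻ x in Set.Ioi a, F x) * (∫⁻ s in Set.Ioi (0:ℝ), G s)
        + (∫⁻ x in Set.Ioi (0:ℝ), F x) * ∫⁻ s in Set.Ioi (t - a), G s := by
  rw [lswap hF hG t]
  have hsplit : Set.Ioi (0:ℝ) = Set.Ioc 0 (t - a) ∪ Set.Ioi (t - a) :=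
    (Set.Ioc_union_Ioi_eq_Ioi (by linarith)).symm
  have hsum : ∫⁻ s in Set.Ioi (0:ℝ), G s * ∫⁻ x in Set.Ioi (max (t - s) 0), F x
      = (∫⁻ s in Set.Ioc 0 (t-a), G s * ∫⁻ x in Set.Ioi (max (t - s) 0), F x)
        + ∫⁻ s in Set.Ioi (t-a), G s * ∫⁻ x in Set.Ioi (max (t - s) 0), F x := by
    rw [← lintegral_union measurableSet_Ioi (Set.Ioc_disjoint_Ioi le_rfl), ← hsplit]
  rw [hsum]
  gcongr ?_ + ?_
  · calc ∫⁻ s in Set.Ioc 0 (t - a), G s * ∫⁻ x in Set.Ioi (max (t - s) 0), F x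
        ≤ ∫⁻ s in Set.Ioc 0 (t - a), G s * ∫⁻ x in Set.Ioi a, F x := by
          refine setLIntegral_mono (hG.mul_const _) fun s hs => ?_
          refine mul_le_mul_right (lintegral_mono_set (Set.Ioi_subset_Ioi ?_)) _
          exact le_max_of_le_left (by simp at hs; linarith [hs.2])
      _ = (∫⁻ s in Set.Ioc 0 (t - a), G s) * ∫⁻ x in Set.Ioi a, F x :=
          lintegral_mul_const _ hG
      _ ≤ (∫⁻ s in Set.Ioi (0:ℝ), G s) * ∫⁻ x in Set.Ioi a, F x := by
          gcongr
          exact Set.Ioc_subset_Ioi_self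
      _ = (∫⁻ x in Set.Ioi a, F x) * ∫⁻ s in Set.Ioi (0:ℝ), G s := mul_comm _ _
  · calc ∫⁻ s in Set.Ioi (t - a), G s * ∫⁻ x in Set.Ioi (max (t - s) 0), F x
        ≤ ∫⁻ s in Set.Ioi (t - a), G s * ∫⁻ x in Set.Ioi (0:ℝ), F x := by
          refine setLIntegral_mono (hG.mul_const _) fun s hs => ?_
          exact mul_le_mul_right (lintegral_mono_set (Set.Ioi_subset_Ioi (le_max_right _ _))) _
      _ = (∫⁻ s in Set.Ioi (t - a), G s) * ∫⁻ x in Set.Ioi (0:ℝ), F x :=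
          lintegral_mul_const _ hG
      _ = (∫⁻ x in Set.Ioi (0:ℝ), F x) * ∫⁻ s in Set.Ioi (t - a), G s := mul_comm _ _

lemma conv_ofReal_ae {φ g : ℝ → ℝ} (hφm : Measurable φ) (hφnn : ∀ s, 0 ≤ φ s)
    (hgm : Measurable g) (hgnn : ∀ s, 0 ≤ g s)
    (hΛ : ∫⁻ x in Set.Ioi (0:ℝ), ENNReal.ofReal (φ x) ≠ ⊤)
    (hG : ∫⁻ s in Set.Ioi (0:ℝ), ENNReal.ofReal (g s) ≠ ⊤) :
    ∀ᵐ u ∂(volume.restrict (Set.Ioi (0:ℝ))),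
      ENNReal.ofReal (conv φ g u) =
        ∫⁻ s in Set.Ioc 0 u, ENNReal.ofReal (φ (u - s)) * ENNReal.ofReal (g s) := by
  set F : ℝ → ℝ≥0∞ := fun x => ENNReal.ofReal (φ x) with hF
  set G : ℝ → ℝ≥0∞ := fun x => ENNReal.ofReal (g x) with hGdef
  have hFm : Measurable F := hφm.ennreal_ofReal
  have hGm : Measurable G := hgm.ennreal_ofReal
  set H : ℝ → ℝ≥0∞ := fun u => ∫⁻ s in Set.Ioc 0 u, F (u - s) * G s with hH
  have hHm : Measurable H := by
    have h1 : ∀ u, H u = ∫⁻ s, {q : ℝ × ℝ | 0 < q.2 ∧ q.2 ≤ q.1}.indicator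
        (fun q => F (q.1 - q.2) * G q.2) (u, s) := by
      intro u
      rw [hH]
      simp only
      rw [← lintegral_indicator measurableSet_Ioc]
      refine lintegral_congr fun s => ?_
      simp [Set.indicator_apply, Set.mem_Ioc]
    have : H = fun u => ∫⁻ s, {q : ℝ × ℝ | 0 < q.2 ∧ q.2 ≤ q.1}.indicator
        (fun q => F (q.1 - q.2) * G q.2) (u, s) := funext h1
    rw [this]
    apply Measurable.lintegral_prod_right'
    exact Measurable.indicator ((hFm.comp (measurable_fst.sub measurable_snd)).mul
      (hGm.comp measurable_snd))
      ((measurableSet_lt measurable_const measurable_snd).inter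
        (measurableSet_le measurable_snd measurable_fst))
  have hHfin : ∀ᵐ u ∂(volume.restrict (Set.Ioi (0:ℝ))), H u < ⊤ := by
    refine ae_lt_top hHm ?_
    rw [show ∫⁻ u in Set.Ioi (0:ℝ), H u = _ from ltotal hFm hGm]
    exact mul_ne_top hΛ hG
  filter_upwards [hHfin] with u hu
  have hlint : ∫⁻ s in Set.Ioc 0 u, ENNReal.ofReal (φ (u - s) * g s) = H u := by
    refine lintegral_congr fun s => ?_
    rw [ENNReal.ofReal_mul (hφnn _)]
  have hint : IntegrableOn (fun s => φ (u - s) * g s) (Set.Ioc 0 u) := by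
    constructor
    · exact ((hφm.comp (measurable_const.sub measurable_id)).mul hgm).aestronglyMeasurable
    · rw [hasFiniteIntegral_iff_ofReal (Filter.Eventually.of_forall fun s =>
        mul_nonneg (hφnn _) (hgnn _))]
      rw [hlint]
      exact hu
  rw [conv, ofReal_integral_eq_lintegral_ofReal hint (Filter.Eventually.of_forall fun s =>
    mul_nonneg (hφnn _) (hgnn _)), hlint]

lemma convIter_claim {φ : ℝ → ℝ} (hφm : Measurable φ) (hφnn : ∀ s, 0 ≤ φ s)
    (hΛfin : ∫⁻ x in Set.Ioi (0:ℝ), ENNReal.ofReal (φ x) ≠ ⊤) :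
    ∀ n : ℕ, 1 ≤ n →
      (∫⁻ u in Set.Ioi (0:ℝ), ENNReal.ofReal (convIter φ n u)
          = (∫⁻ x in Set.Ioi (0:ℝ), ENNReal.ofReal (φ x)) ^ n) ∧
      ∀ t : ℝ, 0 ≤ t →
        ∫⁻ u in Set.Ioi t, ENNReal.ofReal (convIter φ n u)
          ≤ (n : ℝ≥0∞) * (∫⁻ x in Set.Ioi (0:ℝ), ENNReal.ofReal (φ x)) ^ (n - 1) *
              ∫⁻ x in Set.Ioi (t / n), ENNReal.ofReal (φ x) := by
  set Λ' : ℝ≥0∞ := ∫⁻ x in Set.Ioi (0:ℝ), ENNReal.ofReal (φ x) with hΛ'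
  have hFm : Measurable fun x => ENNReal.ofReal (φ x) := hφm.ennreal_ofReal
  intro n hn
  induction n, hn using Nat.le_induction with
  | base =>
    constructor
    · simp [convIter, pow_one, hΛ']
    · intro t _
      simp [convIter, pow_zero, one_mul, div_one]
  | succ n hn ih =>
    have hstep : convIter φ (n+1) = conv φ (convIter φ n) := by
      obtain ⟨m, rfl⟩ : ∃ m, n = m + 1 := ⟨n - 1, by omega⟩
      rfl
    have hgm : Measurable (convIter φ n) := convIter_meas hφm n
    have hGm : Measurable fun s => ENNReal.ofReal (convIter φ n s) := hgm.ennreal_ofReal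
    have hGfin : ∫⁻ s in Set.Ioi (0:ℝ), ENNReal.ofReal (convIter φ n s) ≠ ⊤ := by
      rw [ih.1]; exact pow_ne_top hΛfin
    have aeq : ∀ᵐ u ∂(volume.restrict (Set.Ioi (0:ℝ))),
        ENNReal.ofReal (convIter φ (n+1) u) =
          ∫⁻ s in Set.Ioc 0 u, ENNReal.ofReal (φ (u - s)) *
            ENNReal.ofReal (convIter φ n s) := by
      filter_upwards [conv_ofReal_ae hφm hφnn hgm (convIter_nonneg hφnn n) hΛfin hGfin] with u hu
      rw [hstep, hu]
    constructor
    · rw [lintegral_congr_ae aeq, ltotal hFm hGm, ih.1, ← pow_succ']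
    · intro t ht
      have hn1 : (1:ℝ) ≤ (n:ℝ) + 1 := by have := Nat.cast_nonneg (α := ℝ) n; linarith
      set a : ℝ := t / ((n:ℝ) + 1) with hadef
      have ha : 0 ≤ a := by positivity
      have hat : a ≤ t := div_le_self ht hn1
      have hta : 0 ≤ t - a := by linarith
      have harg : (t - a) / n = a := by
        have hne : (n:ℝ) ≠ 0 := Nat.cast_ne_zero.mpr (by omega)
        have hne1 : (n:ℝ) + 1 ≠ 0 := by positivity
        field_simp [hadef]
        have h2 : a * ((n:ℝ) + 1) = t := by rw [hadef]; field_simp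
        linear_combination -h2
      have transfer : ∫⁻ u in Set.Ioi t, ENNReal.ofReal (convIter φ (n+1) u)
          = ∫⁻ u in Set.Ioi t, ∫⁻ s in Set.Ioc 0 u, ENNReal.ofReal (φ (u - s)) *
              ENNReal.ofReal (convIter φ n s) :=
        lintegral_congr_ae (ae_restrict_of_ae_restrict_of_subset (Set.Ioi_subset_Ioi ht) aeq)
      have hpow : Λ' * ((n:ℝ≥0∞) * Λ' ^ (n-1)) = (n:ℝ≥0∞) * Λ' ^ n := by
        rw [← mul_assoc, mul_comm Λ' (n:ℝ≥0∞), mul_assoc, ← pow_succ']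
        congr 2
        omega
      calc ∫⁻ u in Set.Ioi t, ENNReal.ofReal (convIter φ (n+1) u)
          = ∫⁻ u in Set.Ioi t, ∫⁻ s in Set.Ioc 0 u, ENNReal.ofReal (φ (u - s)) *
              ENNReal.ofReal (convIter φ n s) := transfer
        _ ≤ (∫⁻ x in Set.Ioi a, ENNReal.ofReal (φ x)) *
              (∫⁻ s in Set.Ioi (0:ℝ), ENNReal.ofReal (convIter φ n s))
            + Λ' * ∫⁻ s in Set.Ioi (t - a), ENNReal.ofReal (convIter φ n s) :=
            ltail hFm hGm ha hat
        _ ≤ (∫⁻ x in Set.Ioi a, ENNReal.ofReal (φ x)) * Λ' ^ n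
            + Λ' * ((n:ℝ≥0∞) * Λ' ^ (n-1) * ∫⁻ x in Set.Ioi ((t-a)/n), ENNReal.ofReal (φ x)) := by
            rw [ih.1]
            gcongr
            exact ih.2 (t - a) hta
        _ = (∫⁻ x in Set.Ioi a, ENNReal.ofReal (φ x)) * Λ' ^ n
            + (n:ℝ≥0∞) * Λ' ^ n * ∫⁻ x in Set.Ioi a, ENNReal.ofReal (φ x) := by
            rw [harg, ← mul_assoc, hpow]
        _ = ((n:ℝ≥0∞) + 1) * Λ' ^ n * ∫⁻ x in Set.Ioi a, ENNReal.ofReal (φ x) := by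
            ring
        _ = ((n+1 : ℕ) : ℝ≥0∞) * Λ' ^ (n + 1 - 1) *
              ∫⁻ x in Set.Ioi (t / ((n:ℕ)+1 : ℕ)), ENNReal.ofReal (φ x) := by
            push_cast
            simp [hadef]

/-- If Λ = ∫_0^∞ φ < ∞ then for all n ≥ 1 and t ≥ 0,
`|∫_0^t φ^{*n}(s) ds − Λ^n| ≤ n Λ^{n−1} ∫_{t/n}^∞ φ(s) ds`. -/
theorem stmt3 (φ : ℝ → ℝ)
    (hφmeas : Measurable φ) (hφnn : ∀ s, 0 ≤ φ s) (hφ0 : ∀ s < (0:ℝ), φ s = 0)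
    (hΛpos : 0 < ∫ s in Set.Ioi (0:ℝ), φ s)
    (hΛint : IntegrableOn φ (Set.Ioi 0)) :
    ∀ n : ℕ, 1 ≤ n → ∀ t : ℝ, 0 ≤ t →
      |(∫ s in Set.Ioc (0:ℝ) t, convIter φ n s) - (∫ s in Set.Ioi (0:ℝ), φ s) ^ n|
        ≤ (n : ℝ) * (∫ s in Set.Ioi (0:ℝ), φ s) ^ (n - 1) *
            ∫ s in Set.Ioi (t / n), φ s := by
  set Λ : ℝ := ∫ s in Set.Ioi (0:ℝ), φ s with hΛdef
  have hΛnn : 0 ≤ Λ := hΛpos.le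
  have hof : ∫⁻ x in Set.Ioi (0:ℝ), ENNReal.ofReal (φ x) = ENNReal.ofReal Λ :=
    (ofReal_integral_eq_lintegral_ofReal hΛint (Filter.Eventually.of_forall hφnn)).symm
  have hΛfin : ∫⁻ x in Set.Ioi (0:ℝ), ENNReal.ofReal (φ x) ≠ ⊤ := by
    rw [hof]; exact ofReal_ne_top
  intro n hn t ht
  obtain ⟨hclaim1, hclaim2⟩ := convIter_claim hφmeas hφnn hΛfin n hn
  have tnn : 0 ≤ t / n := div_nonneg ht (Nat.cast_nonneg n)
  have htail_int : IntegrableOn φ (Set.Ioi (t / n)) :=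
    hΛint.mono_set (Set.Ioi_subset_Ioi tnn)
  set tailR : ℝ := ∫ s in Set.Ioi (t / n), φ s with htaildef
  have htailnn : 0 ≤ tailR :=
    setIntegral_nonneg measurableSet_Ioi fun s _ => hφnn s
  have hof2 : ∫⁻ x in Set.Ioi (t / n), ENNReal.ofReal (φ x) = ENNReal.ofReal tailR :=
    (ofReal_integral_eq_lintegral_ofReal htail_int (Filter.Eventually.of_forall hφnn)).symm
  set B : ℝ≥0∞ := ∫⁻ s in Set.Ioc (0:ℝ) t, ENNReal.ofReal (convIter φ n s) with hBdef
  set T : ℝ≥0∞ := ∫⁻ s in Set.Ioi t, ENNReal.ofReal (convIter φ n s) with hTdef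
  have hBT : B + T = (ENNReal.ofReal Λ) ^ n := by
    rw [hBdef, hTdef, ← lintegral_union measurableSet_Ioi (Set.Ioc_disjoint_Ioi le_rfl),
      Set.Ioc_union_Ioi_eq_Ioi ht, ← hof, ← hclaim1]
  have hpowfin : (ENNReal.ofReal Λ) ^ n ≠ ⊤ := pow_ne_top ofReal_ne_top
  have hBfin : B ≠ ⊤ := fun h => hpowfin (by rw [← hBT, h, top_add])
  have hTfin : T ≠ ⊤ := fun h => hpowfin (by rw [← hBT, h, add_top])
  have hreal : ∫ s in Set.Ioc (0:ℝ) t, convIter φ n s = B.toReal := by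
    rw [hBdef, integral_eq_lintegral_of_nonneg_ae
      (Filter.Eventually.of_forall fun s => convIter_nonneg hφnn n s)
      (convIter_meas hφmeas n).aestronglyMeasurable]
  have hpowR : Λ ^ n = ((ENNReal.ofReal Λ) ^ n).toReal := by
    rw [toReal_pow, toReal_ofReal hΛnn]
  have hsum : Λ ^ n = B.toReal + T.toReal := by
    rw [hpowR, ← hBT, toReal_add hBfin hTfin]
  have hBle : B.toReal ≤ Λ ^ n := by
    rw [hsum]; exact le_add_of_nonneg_right toReal_nonneg
  rw [hreal, abs_of_nonpos (by linarith)]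
  have hT : Λ ^ n - B.toReal = T.toReal := by linarith
  rw [neg_sub, hT]
  have hTbound : T ≤ (n : ℝ≥0∞) * (ENNReal.ofReal Λ) ^ (n - 1) * ENNReal.ofReal tailR := by
    have := hclaim2 t ht
    rwa [hof, hof2] at this
  have hRfin : (n : ℝ≥0∞) * (ENNReal.ofReal Λ) ^ (n - 1) * ENNReal.ofReal tailR ≠ ⊤ :=
    mul_ne_top (mul_ne_top (natCast_ne_top n) (pow_ne_top ofReal_ne_top)) ofReal_ne_top
  calc T.toReal ≤ ((n : ℝ≥0∞) * (ENNReal.ofReal Λ) ^ (n - 1) * ENNReal.ofReal tailR).toReal :=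
        toReal_mono hRfin hTbound
    _ = (n : ℝ) * Λ ^ (n - 1) * tailR := by
        rw [toReal_mul, toReal_mul, toReal_natCast, toReal_pow, toReal_ofReal hΛnn,
          toReal_ofReal htailnn]
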